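/- Let β ≥ 0 and define f(x, y) := ∫_{−∞}^{1} min(1, |x| + |t| + β) · |y| · 1_{|t| ≤ |y|} dt for real x, y. Then f(x, y) ≤ 2β y^2 + 3 g(x) + 3 g(y), where g(u) = min(u^2, |u|^3). -/

import Mathlib

open MeasureTheory

lemma key_ineq (a b : ℝ) (ha : 0 ≤ a) (hb : 0 ≤ b) (hb1 : b ≤ 1) :
    2*a*b^2 ≤ 3 * min (a^2) (a^3) + b^3 := by
  rcases le_total a 1 with h | h
  · rw [min_eq_right (by nlinarith)]
    nlinarith [mul_nonneg (by linarith : (0:ℝ) ≤ a + b)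
      (by nlinarith [sq_nonneg (2*a - b)] : (0:ℝ) ≤ 3*a^2 - 3*a*b + b^2)]
  · rw [min_eq_left (by nlinarith)]
    nlinarith [mul_nonneg ha hb]

theorem stmt_14 (β : ℝ) (hβ : 0 ≤ β) (x y : ℝ) :
    (∫ t in Set.Iic (1:ℝ),
        (if |t| ≤ |y| then min 1 (|x| + |t| + β) * |y| else 0)) ≤
      2 * β * y ^ 2 + 3 * min (x ^ 2) (|x| ^ 3) + 3 * min (y ^ 2) (|y| ^ 3) := by
  set C : ℝ := min 1 (|x| + |y| + β) * |y| with hC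
  have hCnn : 0 ≤ C := mul_nonneg (le_min one_pos.le (by positivity)) (abs_nonneg y)
  have hg : IntegrableOn ((Set.Icc (-|y|) |y|).indicator (fun _ => C)) (Set.Iic 1) volume := by
    apply Integrable.integrableOn
    rw [integrable_indicator_iff measurableSet_Icc]
    exact (integrableOn_const_iff (by finiteness)).mpr (Or.inr measure_Icc_lt_top)
  have hmono : (∫ t in Set.Iic (1:ℝ),
      (if |t| ≤ |y| then min 1 (|x| + |t| + β) * |y| else 0)) ≤
      ∫ t in Set.Iic (1:ℝ), (Set.Icc (-|y|) |y|).indicator (fun _ => C) t := by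
    apply integral_mono_of_nonneg
    · filter_upwards with t
      by_cases h : |t| ≤ |y| <;> simp [h]
      positivity
    · exact hg
    · filter_upwards with t
      by_cases h : |t| ≤ |y|
      · have ht : t ∈ Set.Icc (-|y|) |y| := by
          constructor <;> [linarith [neg_abs_le t, abs_le.mp h]; linarith [le_abs_self t, (abs_le.mp h).2]]
        simp only [h, if_true, Set.indicator_of_mem ht]
        exact mul_le_mul_of_nonneg_right (min_le_min le_rfl (by linarith [(abs_le.mp h).2])) (abs_nonneg y)
      · have := (not_le.mp h)
        simp only [h, if_false]
        exact Set.indicator_nonneg (fun _ _ => hCnn) t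
  have hcalc : (∫ t in Set.Iic (1:ℝ), (Set.Icc (-|y|) |y|).indicator (fun _ => C) t)
      ≤ C * (2 * |y|) := by
    rw [setIntegral_indicator measurableSet_Icc, setIntegral_const, smul_eq_mul]
    have hvol : (volume (Set.Iic (1:ℝ) ∩ Set.Icc (-|y|) |y|)).toReal ≤ 2 * |y| := by
      have h1 : volume (Set.Iic (1:ℝ) ∩ Set.Icc (-|y|) |y|) ≤ volume (Set.Icc (-|y|) |y|) :=
        measure_mono Set.inter_subset_right
      have h2 : volume (Set.Icc (-|y|) (|y|)) = ENNReal.ofReal (2 * |y|) := by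
        rw [Real.volume_Icc]; ring_nf
      calc (volume (Set.Iic (1:ℝ) ∩ Set.Icc (-|y|) |y|)).toReal
          ≤ (volume (Set.Icc (-|y|) |y|)).toReal := by
            apply ENNReal.toReal_mono _ h1
            rw [h2]; exact ENNReal.ofReal_ne_top
        _ ≤ 2 * |y| := by rw [h2, ENNReal.toReal_ofReal (by positivity)]
    calc (volume (Set.Iic (1:ℝ) ∩ Set.Icc (-|y|) |y|)).toReal * C ≤ (2 * |y|) * C := by
          gcongr
      _ = C * (2 * |y|) := by ring
  refine le_trans (le_trans hmono hcalc) ?_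
  have hminx1 : 0 ≤ min (x ^ 2) (|x| ^ 3) := le_min (sq_nonneg x) (by positivity)
  rcases le_total (|y|) 1 with hy | hy
  · -- small y
    have hminy : min (y ^ 2) (|y| ^ 3) = |y| ^ 3 := by
      rw [min_eq_right]
      rw [← sq_abs]
      nlinarith [abs_nonneg y]
    have hkey' := key_ineq (|x|) (|y|) (abs_nonneg x) (abs_nonneg y) hy
    have hCle : C ≤ (|x| + |y| + β) * |y| := by
      apply mul_le_mul_of_nonneg_right (min_le_right _ _) (abs_nonneg y)
    have hkey := hkey'
    rw [sq_abs x] at hkey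
    have hy2 : |y| ^ 2 = y ^ 2 := sq_abs y
    rw [hminy]
    nlinarith [abs_nonneg y, abs_nonneg x]
  · -- large y
    have hminy : min (y ^ 2) (|y| ^ 3) = y ^ 2 := by
      rw [min_eq_left]
      rw [← sq_abs]
      nlinarith
    have hCle : C ≤ |y| := by
      calc C ≤ 1 * |y| := mul_le_mul_of_nonneg_right (min_le_left _ _) (abs_nonneg y)
        _ = |y| := one_mul _
    rw [hminy]
    nlinarith [abs_nonneg y, sq_abs y]
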